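/- For every natural number n, real u, and real θ > 0, the Gaussian Hermite moment identity holds: ∫_{-∞}^{∞} (2π)^{-1/2} e^{-v²/2} H_n(√θ·v + u) dv = Σ_{k=0}^{⌊n/2⌋} D_n^k (θ-1)^k u^{n-2k}, where D_n^k = n!/((n-2k)!·2^k·k!). -/

import Mathlib

open Nat Polynomial

open MeasureTheory Filter Real

/-- `D n k = n!/((n-2k)! 2^k k!)`. -/
def D (n k : ℕ) : ℕ := n ! / ((n - 2 * k)! * 2 ^ k * k !)

noncomputable section

lemma hasDerivAt_gauss (v : ℝ) :
    HasDerivAt (fun x : ℝ => Real.exp (-x ^ 2 / 2)) (-v * Real.exp (-v ^ 2 / 2)) v := by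
  have h : HasDerivAt (fun x : ℝ => -x ^ 2 / 2) (-v) v := by
    have := ((hasDerivAt_pow 2 v).neg).div_const 2
    refine this.congr_deriv ?_
    push_cast
    ring
  simpa [mul_comm] using h.exp

lemma pow_gauss_bound (m : ℕ) (v : ℝ) :
    ‖v ^ m * Real.exp (-v ^ 2 / 2)‖ ≤ (m ! * Real.exp 1) * Real.exp (-(4 : ℝ)⁻¹ * v ^ 2) := by
  have h1 : |v| ^ m ≤ m ! * Real.exp |v| := by
    have := Real.pow_div_factorial_le_exp |v| (abs_nonneg v) m
    rw [div_le_iff₀ (by positivity)] at this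
    linarith
  have h2 : Real.exp |v| * Real.exp (-v ^ 2 / 2) ≤ Real.exp 1 * Real.exp (-(4 : ℝ)⁻¹ * v ^ 2) := by
    rw [← Real.exp_add, ← Real.exp_add]
    apply Real.exp_le_exp.2
    nlinarith [sq_nonneg (|v| - 2), sq_abs v]
  calc ‖v ^ m * Real.exp (-v ^ 2 / 2)‖ = |v| ^ m * Real.exp (-v ^ 2 / 2) := by
        rw [norm_mul, norm_pow, Real.norm_eq_abs, Real.norm_eq_abs, Real.abs_exp]
  _ ≤ (m ! * Real.exp |v|) * Real.exp (-v ^ 2 / 2) :=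
        mul_le_mul_of_nonneg_right h1 (Real.exp_pos _).le
  _ = m ! * (Real.exp |v| * Real.exp (-v ^ 2 / 2)) := by ring
  _ ≤ m ! * (Real.exp 1 * Real.exp (-(4 : ℝ)⁻¹ * v ^ 2)) :=
        mul_le_mul_of_nonneg_left h2 (by positivity)
  _ = (m ! * Real.exp 1) * Real.exp (-(4 : ℝ)⁻¹ * v ^ 2) := by ring

lemma integrable_pow_gauss (m : ℕ) :
    Integrable (fun v : ℝ => v ^ m * Real.exp (-v ^ 2 / 2)) := by
  apply Integrable.mono' ((integrable_exp_neg_mul_sq (by norm_num : (0:ℝ) < 4⁻¹)).const_mul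
    (m ! * Real.exp 1))
  · exact (Continuous.mul (continuous_pow m) (by fun_prop)).aestronglyMeasurable
  · exact ae_of_all _ (pow_gauss_bound m)

lemma poly_gauss_bound (Q : ℝ[X]) : ∀ v : ℝ,
    ‖Q.eval v * Real.exp (-v ^ 2 / 2)‖ ≤
      (∑ k ∈ Finset.range (Q.natDegree + 1), ‖Q.coeff k‖ * (k ! * Real.exp 1)) *
        Real.exp (-(4 : ℝ)⁻¹ * v ^ 2) := by
  intro v
  have hev : Q.eval v * Real.exp (-v ^ 2 / 2) =
      ∑ k ∈ Finset.range (Q.natDegree + 1), Q.coeff k * (v ^ k * Real.exp (-v ^ 2 / 2)) := by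
    rw [Polynomial.eval_eq_sum_range, Finset.sum_mul]
    simp [mul_assoc]
  rw [hev, Finset.sum_mul]
  refine (norm_sum_le _ _).trans (Finset.sum_le_sum fun k _ => ?_)
  rw [norm_mul, mul_assoc]
  exact mul_le_mul_of_nonneg_left (pow_gauss_bound k v) (norm_nonneg _)

lemma integrable_poly_gauss (Q : ℝ[X]) :
    Integrable (fun v : ℝ => Q.eval v * Real.exp (-v ^ 2 / 2)) := by
  apply Integrable.mono' ((integrable_exp_neg_mul_sq (by norm_num : (0:ℝ) < 4⁻¹)).const_mul
    (∑ k ∈ Finset.range (Q.natDegree + 1), ‖Q.coeff k‖ * (k ! * Real.exp 1)))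
  · exact (Q.continuous.mul
      (by fun_prop)).aestronglyMeasurable
  · exact ae_of_all _ (poly_gauss_bound Q)

lemma tendsto_gauss_atTop :
    Tendsto (fun v : ℝ => Real.exp (-(4 : ℝ)⁻¹ * v ^ 2)) atTop (nhds 0) := by
  apply Real.tendsto_exp_atBot.comp
  have h : Tendsto (fun v : ℝ => (4 : ℝ)⁻¹ * v ^ 2) atTop atTop := by
    apply Tendsto.const_mul_atTop (by norm_num)
    exact tendsto_pow_atTop two_ne_zero
  exact (tendsto_neg_atTop_atBot.comp h).congr (fun v => by simp only [Function.comp]; ring)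

lemma tendsto_gauss_atBot :
    Tendsto (fun v : ℝ => Real.exp (-(4 : ℝ)⁻¹ * v ^ 2)) atBot (nhds 0) := by
  apply Real.tendsto_exp_atBot.comp
  have h : Tendsto (fun v : ℝ => (4 : ℝ)⁻¹ * v ^ 2) atBot atTop := by
    apply Tendsto.const_mul_atTop (by norm_num)
    have : Tendsto (fun v : ℝ => |v| ^ 2) atBot atTop :=
      (tendsto_pow_atTop two_ne_zero).comp tendsto_abs_atBot_atTop
    simpa [sq_abs] using this
  exact (tendsto_neg_atTop_atBot.comp h).congr (fun v => by simp only [Function.comp]; ring)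

lemma tendsto_poly_gauss_atTop (Q : ℝ[X]) :
    Tendsto (fun v : ℝ => Q.eval v * Real.exp (-v ^ 2 / 2)) atTop (nhds 0) := by
  apply squeeze_zero_norm (poly_gauss_bound Q)
  simpa using (tendsto_gauss_atTop).const_mul
    (∑ k ∈ Finset.range (Q.natDegree + 1), ‖Q.coeff k‖ * (k ! * Real.exp 1))

lemma tendsto_poly_gauss_atBot (Q : ℝ[X]) :
    Tendsto (fun v : ℝ => Q.eval v * Real.exp (-v ^ 2 / 2)) atBot (nhds 0) := by
  apply squeeze_zero_norm (poly_gauss_bound Q)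
  simpa using (tendsto_gauss_atBot).const_mul
    (∑ k ∈ Finset.range (Q.natDegree + 1), ‖Q.coeff k‖ * (k ! * Real.exp 1))

end

lemma integral_gauss : ∫ v : ℝ, Real.exp (-v ^ 2 / 2) = Real.sqrt (2 * Real.pi) := by
  have h : (fun v : ℝ => Real.exp (-v ^ 2 / 2)) = fun v : ℝ => Real.exp (-(1/2) * v ^ 2) := by
    funext v; congr 1; ring
  rw [h, integral_gaussian]
  congr 1
  ring

lemma integral_id_gauss : ∫ v : ℝ, v * Real.exp (-v ^ 2 / 2) = 0 := by
  have hd : ∀ v : ℝ, HasDerivAt (fun x : ℝ => -Real.exp (-x ^ 2 / 2))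
      (v * Real.exp (-v ^ 2 / 2)) v := by
    intro v
    have := (hasDerivAt_gauss v).neg
    refine this.congr_deriv ?_
    ring
  have hi : Integrable (fun v : ℝ => v * Real.exp (-v ^ 2 / 2)) := by
    simpa using integrable_pow_gauss 1
  have hbot : Tendsto (fun x : ℝ => -Real.exp (-x ^ 2 / 2)) atBot (nhds 0) := by
    have := (tendsto_poly_gauss_atBot 1).neg
    simpa using this
  have htop : Tendsto (fun x : ℝ => -Real.exp (-x ^ 2 / 2)) atTop (nhds 0) := by
    have := (tendsto_poly_gauss_atTop 1).neg
    simpa using this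
  have := MeasureTheory.integral_of_hasDerivAt_of_tendsto hd hi hbot htop
  simpa using this

lemma gauss_byparts (Q : ℝ[X]) :
    ∫ v : ℝ, (v * Q.eval v) * Real.exp (-v ^ 2 / 2) =
      ∫ v : ℝ, Q.derivative.eval v * Real.exp (-v ^ 2 / 2) := by
  have hd : ∀ v : ℝ, HasDerivAt (fun x : ℝ => Q.eval x * Real.exp (-x ^ 2 / 2))
      ((Q.derivative - X * Q).eval v * Real.exp (-v ^ 2 / 2)) v := by
    intro v
    have := (Q.hasDerivAt v).mul (hasDerivAt_gauss v)
    refine this.congr_deriv ?_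
    simp
    ring
  have hi : Integrable (fun v : ℝ => (Q.derivative - X * Q).eval v * Real.exp (-v ^ 2 / 2)) :=
    integrable_poly_gauss _
  have h0 := MeasureTheory.integral_of_hasDerivAt_of_tendsto hd hi
    (tendsto_poly_gauss_atBot Q) (tendsto_poly_gauss_atTop Q)
  rw [sub_zero] at h0
  have hsplit : ∫ v : ℝ, (Q.derivative - X * Q).eval v * Real.exp (-v ^ 2 / 2)
      = (∫ v : ℝ, Q.derivative.eval v * Real.exp (-v ^ 2 / 2))
        - ∫ v : ℝ, (X * Q).eval v * Real.exp (-v ^ 2 / 2) := by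
    rw [← MeasureTheory.integral_sub (integrable_poly_gauss _) (integrable_poly_gauss _)]
    congr 1
    funext v
    simp
    ring
  rw [hsplit] at h0
  have : ∫ v : ℝ, (X * Q).eval v * Real.exp (-v ^ 2 / 2)
      = ∫ v : ℝ, (v * Q.eval v) * Real.exp (-v ^ 2 / 2) := by
    congr 1; funext v; simp
  linarith [h0, this]

lemma derivative_hermite (n : ℕ) :
    Polynomial.derivative (hermite (n + 1)) = C ((n : ℤ) + 1) * hermite n := by
  induction n with
  | zero => simp [hermite_one, hermite_zero]
  | succ n ih =>
    calc Polynomial.derivative (hermite (n + 1 + 1))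
        = hermite (n + 1) + C ((n : ℤ) + 1) * (X * hermite n - Polynomial.derivative (hermite n)) := by
          rw [hermite_succ (n + 1), Polynomial.derivative_sub, Polynomial.derivative_mul,
            Polynomial.derivative_X, ih, Polynomial.derivative_mul, Polynomial.derivative_C]
          ring
      _ = hermite (n + 1) + C ((n : ℤ) + 1) * hermite (n + 1) := by rw [← hermite_succ]
      _ = C ((n + 1 : ℕ) + 1 : ℤ) * hermite (n + 1) := by
          push_cast
          simp only [C_add, C_1]
          ring

lemma fact_two_mul (k : ℕ) : (2 * k)! = 2 ^ k * k ! * (2 * k - 1)‼ := by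
  induction k with
  | zero => rfl
  | succ k ih =>
    have h1 : 2 * (k + 1) = 2 * k + 2 := by ring
    have h2 : 2 * k + 2 - 1 = 2 * k - 1 + 2 ∨ k = 0 := by omega
    rcases h2 with h2 | rfl
    · rw [h1, h2]
      rw [Nat.factorial_succ, Nat.factorial_succ, ih, Nat.doubleFactorial_add_two]
      rcases Nat.eq_zero_or_pos k with rfl | hk
      · omega
      · have h3 : 2 * k - 1 + 2 = 2 * k + 1 := by omega
        rw [h3, Nat.factorial_succ, Nat.pow_succ]
        ring
    · rfl

lemma D_mul_self {n k : ℕ} (h : 2 * k ≤ n) :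
    D n k * ((n - 2 * k)! * 2 ^ k * k !) = n ! := by
  obtain ⟨j, rfl⟩ : ∃ j, n = 2 * k + j := ⟨n - 2 * k, by omega⟩
  have hd : 2 * k + j - 2 * k = j := by omega
  have key : (2 * k + j).choose (2 * k) * (2 * k - 1)‼ * (j ! * 2 ^ k * k !) = (2 * k + j)! := by
    have hc := Nat.choose_mul_factorial_mul_factorial (Nat.le_add_right (2 * k) j)
    rw [hd] at hc
    rw [← hc, fact_two_mul]
    ring
  have hD : D (2 * k + j) k = (2 * k + j).choose (2 * k) * (2 * k - 1)‼ := by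
    unfold D
    rw [hd]
    exact Nat.div_eq_of_eq_mul_left (by positivity) key.symm
  rw [hD, hd, key]

lemma D_cast {n k : ℕ} (h : 2 * k ≤ n) :
    (D n k : ℝ) * ((n - 2 * k)! * 2 ^ k * k !) = n ! := by
  exact_mod_cast congrArg (Nat.cast : ℕ → ℝ) (D_mul_self h)

lemma D_id1 {n k : ℕ} (h : 2 * k + 1 ≤ n) :
    (D (n + 2) (k + 1) : ℝ) = D (n + 1) (k + 1) + (n + 1) * D n k := by
  obtain ⟨j, rfl⟩ : ∃ j, n = 2 * k + 1 + j := ⟨n - (2 * k + 1), by omega⟩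
  have e1 := D_cast (n := 2 * k + 1 + j + 2) (k := k + 1) (by omega)
  have e2 := D_cast (n := 2 * k + 1 + j + 1) (k := k + 1) (by omega)
  have e3 := D_cast (n := 2 * k + 1 + j) (k := k) (by omega)
  have s1 : 2 * k + 1 + j + 2 - 2 * (k + 1) = j + 1 := by omega
  have s2 : 2 * k + 1 + j + 1 - 2 * (k + 1) = j := by omega
  have s3 : 2 * k + 1 + j - 2 * k = j + 1 := by omega
  rw [s1] at e1; rw [s2] at e2; rw [s3] at e3
  have f1 : ((2 * k + 1 + j + 2)! : ℝ) = (2 * k + 1 + j + 2) * ((2 * k + 1 + j + 1) * (2 * k + 1 + j)!) := by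
    push_cast [Nat.factorial_succ (2 * k + 1 + j + 1), Nat.factorial_succ (2 * k + 1 + j)]
    ring
  have f2 : ((2 * k + 1 + j + 1)! : ℝ) = (2 * k + 1 + j + 1) * (2 * k + 1 + j)! := by
    push_cast [Nat.factorial_succ (2 * k + 1 + j)]
    ring
  have g1 : ((j + 1)! : ℝ) = (j + 1) * j ! := by push_cast [Nat.factorial_succ]; ring
  have g2 : (((k + 1))! : ℝ) = (k + 1) * k ! := by push_cast [Nat.factorial_succ]; ring
  have g3 : ((2 : ℝ) ^ (k + 1)) = 2 * 2 ^ k := by ring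
  push_cast at e1 e2 e3
  rw [f1, g1, g2, g3] at e1
  rw [f2, g2, g3] at e2
  rw [g1] at e3
  have hj : (j ! : ℝ) ≠ 0 := by positivity
  have hk : (k ! : ℝ) ≠ 0 := by positivity
  have h2 : ((2 : ℝ) ^ k) ≠ 0 := by positivity
  have hj1 : ((j : ℝ) + 1) ≠ 0 := by positivity
  have hk1 : ((k : ℝ) + 1) ≠ 0 := by positivity
  have ha : (D (2 * k + 1 + j + 2) (k + 1) : ℝ) =
      ((2 * k + 1 + j + 2) * ((2 * k + 1 + j + 1) * (2 * k + 1 + j)!)) /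
        ((j + 1) * j ! * (2 * 2 ^ k) * ((k + 1) * k !)) := by
    rw [eq_div_iff (by positivity)]
    linarith [e1]
  have hb : (D (2 * k + 1 + j + 1) (k + 1) : ℝ) =
      ((2 * k + 1 + j + 1) * (2 * k + 1 + j)!) / (j ! * (2 * 2 ^ k) * ((k + 1) * k !)) := by
    rw [eq_div_iff (by positivity)]
    linarith [e2]
  have hc : (D (2 * k + 1 + j) k : ℝ) =
      ((2 * k + 1 + j)! : ℝ) / ((j + 1) * j ! * 2 ^ k * k !) := by
    rw [eq_div_iff (by positivity)]
    linarith [e3]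
  rw [ha, hb, hc]
  push_cast
  field_simp
  ring

lemma D_id2 (m : ℕ) : (D (2 * m + 2) (m + 1) : ℝ) = (2 * m + 1) * D (2 * m) m := by
  have e1 := D_cast (n := 2 * m + 2) (k := m + 1) (by omega)
  have e2 := D_cast (n := 2 * m) (k := m) (by omega)
  have s1 : 2 * m + 2 - 2 * (m + 1) = 0 := by omega
  have s2 : 2 * m - 2 * m = 0 := by omega
  rw [s1] at e1; rw [s2] at e2
  have f1 : ((2 * m + 2)! : ℝ) = (2 * m + 2) * ((2 * m + 1) * (2 * m)!) := by
    push_cast [Nat.factorial_succ (2 * m + 1), Nat.factorial_succ (2 * m)]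
    ring
  have g2 : (((m + 1))! : ℝ) = (m + 1) * m ! := by push_cast [Nat.factorial_succ]; ring
  have g3 : ((2 : ℝ) ^ (m + 1)) = 2 * 2 ^ m := by ring
  push_cast at e1 e2
  rw [f1, g2, g3, Nat.factorial_zero] at e1
  rw [Nat.factorial_zero] at e2
  norm_num at e1 e2
  have ha : (D (2 * m + 2) (m + 1) : ℝ) =
      ((2 * m + 2) * ((2 * m + 1) * (2 * m)!)) / ((2 * 2 ^ m) * ((m + 1) * m !)) := by
    rw [eq_div_iff (by positivity)]
    linarith [e1]
  have hb : ((2 * m)! : ℝ) = (D (2 * m) m : ℝ) * (2 ^ m * m !) := by linarith [e2]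
  rw [ha, hb]
  push_cast
  field_simp

lemma D_zero (n : ℕ) : D n 0 = 1 := by
  unfold D
  simp [Nat.div_self (Nat.factorial_pos n)]

lemma term_id {u θ : ℝ} {n k : ℕ} (h : 2 * k + 1 ≤ n) :
    (D (n + 2) (k + 1) : ℝ) * (θ - 1) ^ (k + 1) * u ^ (n + 2 - 2 * (k + 1)) =
    u * ((D (n + 1) (k + 1) : ℝ) * (θ - 1) ^ (k + 1) * u ^ (n + 1 - 2 * (k + 1))) +
    ((n : ℝ) + 1) * (θ - 1) * ((D n k : ℝ) * (θ - 1) ^ k * u ^ (n - 2 * k)) := by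
  have e1 : n + 2 - 2 * (k + 1) = n - 2 * k := by omega
  have e2 : n - 2 * k = (n + 1 - 2 * (k + 1)) + 1 := by omega
  rw [D_id1 h, e1, e2]
  ring

lemma sum_glue₁ (m : ℕ) (A B C : ℕ → ℝ) (u c : ℝ)
    (h0 : A 0 = u * B 0)
    (hmid : ∀ k < m, A (k + 1) = u * B (k + 1) + c * C k)
    (hlast : A (m + 1) = c * C m) :
    ∑ k ∈ Finset.range (m + 2), A k =
      u * ∑ k ∈ Finset.range (m + 1), B k + c * ∑ k ∈ Finset.range (m + 1), C k := by
  rw [Finset.sum_range_succ A (m + 1), Finset.sum_range_succ' A m,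
    Finset.sum_range_succ' B m, Finset.sum_range_succ C m]
  have h : ∑ k ∈ Finset.range m, A (k + 1)
      = ∑ k ∈ Finset.range m, (u * B (k + 1) + c * C k) :=
    Finset.sum_congr rfl fun k hk => hmid k (Finset.mem_range.1 hk)
  rw [h, Finset.sum_add_distrib, ← Finset.mul_sum, ← Finset.mul_sum, h0, hlast]
  ring

lemma sum_glue₂ (m : ℕ) (A B C : ℕ → ℝ) (u c : ℝ)
    (h0 : A 0 = u * B 0)
    (hmid : ∀ k < m + 1, A (k + 1) = u * B (k + 1) + c * C k) :
    ∑ k ∈ Finset.range (m + 2), A k =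
      u * ∑ k ∈ Finset.range (m + 2), B k + c * ∑ k ∈ Finset.range (m + 1), C k := by
  rw [Finset.sum_range_succ' A (m + 1), Finset.sum_range_succ' B (m + 1)]
  have h : ∑ k ∈ Finset.range (m + 1), A (k + 1)
      = ∑ k ∈ Finset.range (m + 1), (u * B (k + 1) + c * C k) :=
    Finset.sum_congr rfl fun k hk => hmid k (Finset.mem_range.1 hk)
  rw [h, Finset.sum_add_distrib, ← Finset.mul_sum, ← Finset.mul_sum, h0]
  ring

lemma S_rec (u θ : ℝ) (n : ℕ) :
    (∑ k ∈ Finset.range ((n + 2) / 2 + 1),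
        (D (n + 2) k : ℝ) * (θ - 1) ^ k * u ^ (n + 2 - 2 * k))
    = u * (∑ k ∈ Finset.range ((n + 1) / 2 + 1),
        (D (n + 1) k : ℝ) * (θ - 1) ^ k * u ^ (n + 1 - 2 * k))
      + ((n : ℝ) + 1) * (θ - 1) *
        (∑ k ∈ Finset.range (n / 2 + 1), (D n k : ℝ) * (θ - 1) ^ k * u ^ (n - 2 * k)) := by
  rcases Nat.even_or_odd n with ⟨m, rfl⟩ | ⟨m, rfl⟩
  · have r1 : (m + m + 2) / 2 + 1 = m + 2 := by omega
    have r2 : (m + m + 1) / 2 + 1 = m + 1 := by omega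
    have r3 : (m + m) / 2 + 1 = m + 1 := by omega
    rw [r1, r2, r3]
    refine sum_glue₁ m _ _ _ u ((((m + m : ℕ) : ℝ) + 1) * (θ - 1)) ?_ ?_ ?_
    · rw [D_zero, D_zero]
      have e : m + m + 2 - 2 * 0 = (m + m + 1 - 2 * 0) + 1 := by omega
      rw [e]
      ring
    · intro k hk
      exact term_id (by omega)
    · have hmm : m + m = 2 * m := by ring
      rw [hmm]
      have e1 : 2 * m + 2 - 2 * (m + 1) = 0 := by omega
      have e2 : 2 * m - 2 * m = 0 := by omega
      rw [e1, e2, D_id2]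
      push_cast
      ring
  · have r1 : (2 * m + 1 + 2) / 2 + 1 = m + 2 := by omega
    have r2 : (2 * m + 1 + 1) / 2 + 1 = m + 2 := by omega
    have r3 : (2 * m + 1) / 2 + 1 = m + 1 := by omega
    rw [r1, r2, r3]
    refine sum_glue₂ m _ _ _ u ((((2 * m + 1 : ℕ) : ℝ) + 1) * (θ - 1)) ?_ ?_
    · rw [D_zero, D_zero]
      have e : 2 * m + 1 + 2 - 2 * 0 = (2 * m + 1 + 1 - 2 * 0) + 1 := by omega
      rw [e]
      ring
    · intro k hk
      exact term_id (by omega)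

lemma eval_comp_affine (R : ℝ[X]) (s u v : ℝ) :
    (R.comp (C s * X + C u)).eval v = R.eval (s * v + u) := by
  simp [Polynomial.eval_comp]

lemma integrable_poly_affine_gauss (R : ℝ[X]) (s u : ℝ) :
    Integrable (fun v : ℝ => R.eval (s * v + u) * Real.exp (-v ^ 2 / 2)) := by
  have := integrable_poly_gauss (R.comp (C s * X + C u))
  simpa [eval_comp_affine] using this

noncomputable def Hr (n : ℕ) : ℝ[X] := (hermite n).map (Int.castRingHom ℝ)

lemma Hr_zero : Hr 0 = 1 := by simp [Hr, hermite_zero]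

lemma Hr_one : Hr 1 = X := by simp [Hr, hermite_one]

lemma Hr_deriv (n : ℕ) : (Hr (n + 1)).derivative = C ((n : ℝ) + 1) * Hr n := by
  unfold Hr
  rw [Polynomial.derivative_map, derivative_hermite, Polynomial.map_mul, Polynomial.map_C]
  push_cast
  simp

lemma Hr_succ (n : ℕ) : Hr (n + 2) = X * Hr (n + 1) - C ((n : ℝ) + 1) * Hr n := by
  unfold Hr
  rw [hermite_succ (n + 1), Polynomial.map_sub, Polynomial.map_mul, Polynomial.map_X,
    derivative_hermite, Polynomial.map_mul, Polynomial.map_C]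
  push_cast
  simp

lemma I_rec (u θ : ℝ) (hθ : 0 < θ) (n : ℕ) :
    ∫ v : ℝ, (Hr (n + 2)).eval (Real.sqrt θ * v + u) * Real.exp (-v ^ 2 / 2)
      = u * (∫ v : ℝ, (Hr (n + 1)).eval (Real.sqrt θ * v + u) * Real.exp (-v ^ 2 / 2))
        + ((n : ℝ) + 1) * (θ - 1) *
          (∫ v : ℝ, (Hr n).eval (Real.sqrt θ * v + u) * Real.exp (-v ^ 2 / 2)) := by
  set s := Real.sqrt θ with hs
  have hs2 : s * s = θ := Real.mul_self_sqrt hθ.le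
  set Q : ℝ[X] := (Hr (n + 1)).comp (C s * X + C u) with hQ
  have hQe : ∀ v, Q.eval v = (Hr (n + 1)).eval (s * v + u) := fun v => eval_comp_affine _ _ _ _
  have hQd : ∀ v : ℝ, Q.derivative.eval v = s * (((n : ℝ) + 1) * (Hr n).eval (s * v + u)) := by
    intro v
    rw [hQ, Polynomial.derivative_comp, Hr_deriv]
    simp [Polynomial.eval_comp]
    try ring
  have iQ : Integrable (fun v : ℝ => (v * Q.eval v) * Real.exp (-v ^ 2 / 2)) := by
    have := integrable_poly_gauss (X * Q)
    simpa using this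
  have i1 : Integrable (fun v : ℝ => (Hr (n + 1)).eval (s * v + u) * Real.exp (-v ^ 2 / 2)) :=
    integrable_poly_affine_gauss _ _ _
  have i0 : Integrable (fun v : ℝ => (Hr n).eval (s * v + u) * Real.exp (-v ^ 2 / 2)) :=
    integrable_poly_affine_gauss _ _ _
  have key : (fun v : ℝ => (Hr (n + 2)).eval (s * v + u) * Real.exp (-v ^ 2 / 2))
      = fun v : ℝ => s * ((v * Q.eval v) * Real.exp (-v ^ 2 / 2))
        + (u * ((Hr (n + 1)).eval (s * v + u) * Real.exp (-v ^ 2 / 2))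
          - ((n : ℝ) + 1) * ((Hr n).eval (s * v + u) * Real.exp (-v ^ 2 / 2))) := by
    funext v
    rw [Hr_succ]
    simp [hQe]
    try ring
  have iQs : Integrable (fun v : ℝ => s * (v * Q.eval v * Real.exp (-v ^ 2 / 2))) :=
    iQ.const_mul s
  have i1u : Integrable (fun v : ℝ =>
      u * ((Hr (n + 1)).eval (s * v + u) * Real.exp (-v ^ 2 / 2))) := i1.const_mul u
  have i0n : Integrable (fun v : ℝ =>
      ((n : ℝ) + 1) * ((Hr n).eval (s * v + u) * Real.exp (-v ^ 2 / 2))) :=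
    i0.const_mul ((n : ℝ) + 1)
  have i2 : Integrable (fun v : ℝ =>
      u * ((Hr (n + 1)).eval (s * v + u) * Real.exp (-v ^ 2 / 2))
        - ((n : ℝ) + 1) * ((Hr n).eval (s * v + u) * Real.exp (-v ^ 2 / 2))) := i1u.sub i0n
  rw [key, MeasureTheory.integral_add iQs i2, MeasureTheory.integral_sub i1u i0n,
    integral_const_mul, integral_const_mul, integral_const_mul]
  have hbp : ∫ v : ℝ, (v * Q.eval v) * Real.exp (-v ^ 2 / 2)
      = (s * ((n : ℝ) + 1)) * ∫ v : ℝ, (Hr n).eval (s * v + u) * Real.exp (-v ^ 2 / 2) := by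
    rw [gauss_byparts Q]
    have h2 : (fun v : ℝ => Q.derivative.eval v * Real.exp (-v ^ 2 / 2))
        = fun v : ℝ => (s * ((n : ℝ) + 1)) *
            ((Hr n).eval (s * v + u) * Real.exp (-v ^ 2 / 2)) := by
      funext v
      rw [hQd]
      ring
    rw [h2, integral_const_mul]
  rw [hbp]
  linear_combination (((n : ℝ) + 1) *
    (∫ v : ℝ, (Hr n).eval (s * v + u) * Real.exp (-v ^ 2 / 2))) * hs2

lemma I_zero (u s : ℝ) :
    ∫ v : ℝ, (Hr 0).eval (s * v + u) * Real.exp (-v ^ 2 / 2) = Real.sqrt (2 * Real.pi) := by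
  rw [show (fun v : ℝ => (Hr 0).eval (s * v + u) * Real.exp (-v ^ 2 / 2))
      = fun v : ℝ => Real.exp (-v ^ 2 / 2) from funext fun v => by simp [Hr_zero]]
  exact integral_gauss

lemma I_one (u s : ℝ) :
    ∫ v : ℝ, (Hr 1).eval (s * v + u) * Real.exp (-v ^ 2 / 2)
      = u * Real.sqrt (2 * Real.pi) := by
  have i1 : Integrable (fun v : ℝ => v * Real.exp (-v ^ 2 / 2)) := by
    simpa using integrable_pow_gauss 1
  have i0 : Integrable (fun v : ℝ => Real.exp (-v ^ 2 / 2)) := by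
    simpa using integrable_pow_gauss 0
  rw [show (fun v : ℝ => (Hr 1).eval (s * v + u) * Real.exp (-v ^ 2 / 2))
      = fun v : ℝ => s * (v * Real.exp (-v ^ 2 / 2)) + u * Real.exp (-v ^ 2 / 2)
      from funext fun v => by simp [Hr_one]; ring]
  rw [MeasureTheory.integral_add (i1.const_mul s) (i0.const_mul u),
    integral_const_mul, integral_const_mul,
    integral_id_gauss, integral_gauss]
  ring

theorem hermite_gaussian_moment (n : ℕ) (u θ : ℝ) (hθ : 0 < θ) :
    ∫ v : ℝ, (Real.sqrt (2 * Real.pi))⁻¹ * Real.exp (-v ^ 2 / 2) *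
        ((hermite n).map (Int.castRingHom ℝ)).eval (Real.sqrt θ * v + u) =
      ∑ k ∈ Finset.range (n / 2 + 1), (D n k : ℝ) * (θ - 1) ^ k * u ^ (n - 2 * k) := by
  have hmain : ∀ m : ℕ, ∫ v : ℝ, (Hr m).eval (Real.sqrt θ * v + u) * Real.exp (-v ^ 2 / 2)
      = Real.sqrt (2 * Real.pi) *
        ∑ k ∈ Finset.range (m / 2 + 1), (D m k : ℝ) * (θ - 1) ^ k * u ^ (m - 2 * k) := by
    intro m
    induction m using Nat.twoStepInduction with
    | zero =>
      rw [I_zero]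
      simp [D_zero]
    | one =>
      rw [I_one]
      simp [D_zero]
      ring
    | more m ih1 ih2 =>
      rw [I_rec u θ hθ m, ih1, ih2, S_rec u θ m]
      ring
  have hrw : (fun v : ℝ => (Real.sqrt (2 * Real.pi))⁻¹ * Real.exp (-v ^ 2 / 2) *
        ((hermite n).map (Int.castRingHom ℝ)).eval (Real.sqrt θ * v + u))
      = fun v : ℝ => (Real.sqrt (2 * Real.pi))⁻¹ *
          ((Hr n).eval (Real.sqrt θ * v + u) * Real.exp (-v ^ 2 / 2)) := by
    funext v
    rw [Hr]
    ring
  rw [hrw, integral_const_mul, hmain n, ← mul_assoc,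
    inv_mul_cancel₀ (ne_of_gt (Real.sqrt_pos.2 (by positivity))), one_mul]
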